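/- Let λ be an ℓ-core with canonical reduced word w(λ) in the affine symmetric group. Then the Coxeter length of w(λ) equals ∑_{i=0}^{ℓ-1} λ_{R(i)}, where R(i) is the index of the longest row of λ whose rightmost box has residue i (taking λ_{R(i)} = 0 if no row ends in residue i). -/

import Mathlib

/-- The hook length of the box `(a, b)` (0-indexed row `a`, column `b`)
of the Young diagram `μ`: the number of boxes to the right in its row,
plus the number of boxes below in its column, plus one. -/
def hookLen (μ : YoungDiagram) (a b : ℕ) : ℕ :=
  μ.rowLen a + μ.colLen b - a - b - 1

/-- A partition (Young diagram) is an `ℓ`-core when no box has hook length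
divisible by `ℓ`. -/
def IsCore (ℓ : ℕ) (μ : YoungDiagram) : Prop :=
  ∀ a b : ℕ, (a, b) ∈ μ → ¬ ℓ ∣ hookLen μ a b

/-- Two cells are adjacent if they share an edge. -/
def AdjCell (p q : ℕ × ℕ) : Prop :=
  (p.1 = q.1 ∧ (p.2 = q.2 + 1 ∨ q.2 = p.2 + 1)) ∨
  (p.2 = q.2 ∧ (p.1 = q.1 + 1 ∨ q.1 = p.1 + 1))

/-- A finite set of cells is connected if any two of its cells are joined by a
path of edge-adjacent cells inside the set. -/
def ConnectedCells (s : Finset (ℕ × ℕ)) : Prop :=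
  ∀ p ∈ s, ∀ q ∈ s,
    Relation.ReflTransGen (fun x y => x ∈ s ∧ y ∈ s ∧ AdjCell x y) p q

/-- A set of cells contains no 2×2 square. -/
def No2x2 (s : Finset (ℕ × ℕ)) : Prop :=
  ¬ ∃ a b : ℕ, (a, b) ∈ s ∧ (a + 1, b) ∈ s ∧ (a, b + 1) ∈ s ∧ (a + 1, b + 1) ∈ s

/-- `s` is a removable `ℓ`-rim hook of the Young diagram `lam`: a connected set of
`ℓ` cells of `lam`, containing no 2×2 square, whose removal from `lam` leaves the
Young diagram of a partition. -/
def IsRemovableRimHook (ℓ : ℕ) (lam : YoungDiagram) (s : Finset (ℕ × ℕ)) : Prop :=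
  ∃ μ : YoungDiagram, μ.cells ⊆ lam.cells ∧ s = lam.cells \ μ.cells ∧
    s.card = ℓ ∧ ConnectedCells s ∧ No2x2 s

/-- A set of cells all lying in a single row. -/
def HorizontalCells (s : Finset (ℕ × ℕ)) : Prop := ∀ p ∈ s, ∀ q ∈ s, p.1 = q.1

/-- A set of cells all lying in a single column. -/
def VerticalCells (s : Finset (ℕ × ℕ)) : Prop := ∀ p ∈ s, ∀ q ∈ s, p.2 = q.2

/-- Carter's condition (⋆): for all pairs of boxes in the same column of `lam`,
`ℓ` divides one hook length iff it divides the other. -/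
def StarCond (ℓ : ℕ) (lam : YoungDiagram) : Prop :=
  ∀ a b c : ℕ, (a, c) ∈ lam → (b, c) ∈ lam →
    (ℓ ∣ hookLen lam a c ↔ ℓ ∣ hookLen lam b c)

/-- `b` is obtained from `a` by removing a horizontal `ℓ`-rim hook;
equivalently `a` is obtained from `b` by adding a horizontal `ℓ`-rim hook. -/
def RemoveHorizHook (ℓ : ℕ) (a b : YoungDiagram) : Prop :=
  ∃ s, IsRemovableRimHook ℓ a s ∧ HorizontalCells s ∧ b.cells = a.cells \ s

/-- A partition is `ℓ`-regular if it has no `ℓ` equal nonzero parts. -/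
def Regular (ℓ : ℕ) (lam : YoungDiagram) : Prop :=
  ∀ i : ℕ, lam.rowLen i = lam.rowLen (i + ℓ - 1) → lam.rowLen i = 0

/-- An `ℓ`-partition: an `ℓ`-regular partition each of whose removable `ℓ`-rim hooks
is horizontal, and such that this remains true after removing any sequence of
horizontal `ℓ`-rim hooks. -/
def IsEllPartition (ℓ : ℕ) (lam : YoungDiagram) : Prop :=
  Regular ℓ lam ∧
  ∀ μ : YoungDiagram, Relation.ReflTransGen (RemoveHorizHook ℓ) lam μ →
    ∀ s, IsRemovableRimHook ℓ μ s → HorizontalCells s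

/-- The residue of the position in row `a`, column `b` (0-indexed): `(b - a) mod ℓ`. -/
def resBox (ℓ : ℕ) (a b : ℕ) : ZMod ℓ := (b : ZMod ℓ) - (a : ZMod ℓ)

/-- `(a,b)` is a removable box of `lam`: it is a box of `lam` whose removal
leaves a Young diagram. -/
def IsRemovableBox (lam : YoungDiagram) (a b : ℕ) : Prop :=
  (a, b) ∈ lam ∧ (a, b + 1) ∉ lam ∧ (a + 1, b) ∉ lam

/-- `(a,b)` is an addable box of `lam`: it is not a box of `lam` and adding it
yields a Young diagram. -/
def IsAddableBox (lam : YoungDiagram) (a b : ℕ) : Prop :=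
  (a, b) ∉ lam ∧ (b = 0 ∨ (a, b - 1) ∈ lam) ∧ (a = 0 ∨ (a - 1, b) ∈ lam)

/-- The residue of the rightmost box in the bottom row of a nonempty diagram `μ`. -/
def BottomRes (ℓ : ℕ) (μ : YoungDiagram) : ZMod ℓ :=
  resBox ℓ (μ.colLen 0 - 1) (μ.rowLen (μ.colLen 0 - 1) - 1)

/-- One step of the canonical reduced word: `ν` is obtained from the nonempty
diagram `μ` by removing all boxes of residue `i` lying at the end of both their row
and their column, where `i` is the residue of the rightmost box of the bottom row. -/
def CanonicalStep (ℓ : ℕ) (μ ν : YoungDiagram) : Prop :=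
  μ ≠ ⊥ ∧
  ∀ p : ℕ × ℕ, p ∈ ν ↔
    (p ∈ μ ∧ ¬ (IsRemovableBox μ p.1 p.2 ∧ resBox ℓ p.1 p.2 = BottomRes ℓ μ))

/-- The length `λ_{R(i)}` of the longest row of `lam` whose rightmost box has
residue `i` (0 if no row ends in residue `i`). -/
noncomputable def LongestRowWithRes (ℓ : ℕ) (lam : YoungDiagram) (i : ZMod ℓ) : ℕ :=
  sSup {n : ℕ | 0 < n ∧ ∃ a : ℕ, lam.rowLen a = n ∧ resBox ℓ a (n - 1) = i}

section AuxCoreLen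

def betaZ (μ : YoungDiagram) (a : ℕ) : ℤ := (μ.rowLen a : ℤ) - a

def InB (μ : YoungDiagram) (x : ℤ) : Prop := ∃ a, betaZ μ a = x

def BClosed (ℓ : ℕ) (μ : YoungDiagram) : Prop := ∀ x, InB μ x → InB μ (x - ℓ)

lemma betaZ_strictAnti (μ : YoungDiagram) : StrictAnti (betaZ μ) := by
  have h : ∀ a, betaZ μ (a + 1) < betaZ μ a := by
    intro a
    have := μ.rowLen_anti a (a+1) (by omega)
    unfold betaZ; push_cast; omega
  exact strictAnti_nat_of_succ_lt h

lemma betaZ_le_sub (μ : YoungDiagram) (a k : ℕ) : betaZ μ (a + k) ≤ betaZ μ a - k := by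
  induction k with
  | zero => simp
  | succ k ih =>
    have := betaZ_strictAnti μ (show a + k < a + (k+1) by omega)
    push_cast; omega

lemma rowLen_eq_zero_of_ge (μ : YoungDiagram) {a : ℕ} (h : μ.colLen 0 ≤ a) :
    μ.rowLen a = 0 := by
  by_contra hne
  have : (a, 0) ∈ μ := YoungDiagram.mem_iff_lt_rowLen.2 (by omega)
  have := YoungDiagram.mem_iff_lt_colLen.1 this
  omega

lemma betaZ_of_ge (μ : YoungDiagram) {a : ℕ} (h : μ.colLen 0 ≤ a) :
    betaZ μ a = -a := by
  simp [betaZ, rowLen_eq_zero_of_ge μ h]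

lemma exists_class (ℓ : ℕ) (hℓ : 2 ≤ ℓ) (μ : YoungDiagram) (d : ZMod ℓ) :
    ∃ a : ℕ, ((betaZ μ a : ZMod ℓ)) = d := by
  haveI : NeZero ℓ := ⟨by omega⟩
  refine ⟨μ.colLen 0 + (-d - (μ.colLen 0 : ZMod ℓ)).val, ?_⟩
  rw [betaZ_of_ge μ (by omega)]
  push_cast [ZMod.natCast_val]
  ring

noncomputable def fIdx (ℓ : ℕ) (μ : YoungDiagram) (d : ZMod ℓ) : ℕ := by
  classical
  exact if h : ∃ a : ℕ, ((betaZ μ a : ZMod ℓ)) = d then Nat.find h else 0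

lemma fIdx_spec (ℓ : ℕ) (hℓ : 2 ≤ ℓ) (μ : YoungDiagram) (d : ZMod ℓ) :
    ((betaZ μ (fIdx ℓ μ d) : ZMod ℓ)) = d ∧
      ∀ b, ((betaZ μ b : ZMod ℓ)) = d → fIdx ℓ μ d ≤ b := by
  classical
  have h := exists_class ℓ hℓ μ d
  rw [fIdx]
  simp only [dif_pos h]
  exact ⟨Nat.find_spec h, fun b hb => Nat.find_min' h hb⟩

lemma fIdx_eq (ℓ : ℕ) (hℓ : 2 ≤ ℓ) (μ : YoungDiagram) (d : ZMod ℓ) (a : ℕ)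
    (h1 : ((betaZ μ a : ZMod ℓ)) = d) (h2 : ∀ b < a, ((betaZ μ b : ZMod ℓ)) ≠ d) :
    fIdx ℓ μ d = a := by
  obtain ⟨hs, hm⟩ := fIdx_spec ℓ hℓ μ d
  have := hm a h1
  rcases lt_or_eq_of_le this with h | h
  · exact absurd hs (h2 _ h)
  · exact h

/-- max property: any row in class `d` has `betaZ` at most that of `fIdx`. -/
lemma betaZ_le_fIdx (ℓ : ℕ) (hℓ : 2 ≤ ℓ) (μ : YoungDiagram) (d : ZMod ℓ) (a : ℕ)
    (h1 : ((betaZ μ a : ZMod ℓ)) = d) : betaZ μ a ≤ betaZ μ (fIdx ℓ μ d) := by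
  exact (betaZ_strictAnti μ).antitone ((fIdx_spec ℓ hℓ μ d).2 a h1)


lemma resBox_end (ℓ : ℕ) (μ : YoungDiagram) (a : ℕ) (h : 0 < μ.rowLen a) :
    resBox ℓ a (μ.rowLen a - 1) = ((betaZ μ a : ZMod ℓ)) - 1 := by
  rw [resBox, betaZ]
  have h2 : ((μ.rowLen a - 1 : ℕ) : ZMod ℓ) = (μ.rowLen a : ZMod ℓ) - 1 := by
    have h3 : (μ.rowLen a - 1) + 1 = μ.rowLen a := by omega
    have := congrArg (fun n : ℕ => (n : ZMod ℓ)) h3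
    push_cast at this
    linear_combination this
  rw [h2]
  push_cast
  ring

lemma longestRow_eq (ℓ : ℕ) (hℓ : 2 ≤ ℓ) (μ : YoungDiagram) (d : ZMod ℓ) :
    LongestRowWithRes ℓ μ (d - 1) = μ.rowLen (fIdx ℓ μ d) := by
  obtain ⟨hs, hm⟩ := fIdx_spec ℓ hℓ μ d
  set P := fIdx ℓ μ d with hP
  by_cases hpos : 0 < μ.rowLen P
  · apply IsGreatest.csSup_eq
    constructor
    · exact ⟨hpos, P, rfl, by rw [resBox_end ℓ μ P hpos, hs]⟩
    · rintro m ⟨hm0, a, ha, hres⟩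
      subst ha
      have h1 : 0 < μ.rowLen a := hm0
      rw [resBox_end ℓ μ a h1] at hres
      have : ((betaZ μ a : ZMod ℓ)) = d := by
        have := sub_eq_sub_iff_sub_eq_sub.mp hres
        linear_combination hres
      have := μ.rowLen_anti P a (hm a this)
      omega
  · have : {n : ℕ | 0 < n ∧ ∃ a : ℕ, μ.rowLen a = n ∧ resBox ℓ a (n - 1) = d - 1} = ∅ := by
      ext m
      simp only [Set.mem_setOf_eq, Set.mem_empty_iff_false, iff_false, not_and]
      rintro hm0 ⟨a, ha, hres⟩
      subst ha
      have h1 : 0 < μ.rowLen a := hm0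
      rw [resBox_end ℓ μ a h1] at hres
      have hcl : ((betaZ μ a : ZMod ℓ)) = d := by linear_combination hres
      have := μ.rowLen_anti P a (hm a hcl)
      omega
    rw [LongestRowWithRes, this]
    simp
    omega


lemma not_inB_between (μ : YoungDiagram) (a : ℕ) (x : ℤ)
    (h1 : betaZ μ (a + 1) < x) (h2 : x < betaZ μ a) : ¬ InB μ x := by
  rintro ⟨b, hb⟩
  rcases le_or_gt b a with h | h
  · have := (betaZ_strictAnti μ).antitone h
    omega
  · have := (betaZ_strictAnti μ).antitone (show a + 1 ≤ b by omega)
    omega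

lemma inB_lt (μ : YoungDiagram) {a b : ℕ} (h : betaZ μ b < betaZ μ a) : a < b := by
  by_contra hc
  have := (betaZ_strictAnti μ).antitone (show b ≤ a by omega)
  omega

lemma closed_iter (ℓ : ℕ) (μ : YoungDiagram) (hcl : BClosed ℓ μ)
    {y : ℤ} (hy : InB μ y) (k : ℕ) : InB μ (y - k * ℓ) := by
  induction k with
  | zero => simpa using hy
  | succ k ih =>
    have := hcl _ ih
    have he : y - (k+1 : ℕ) * ℓ = y - (k:ℕ) * ℓ - ℓ := by push_cast; ring
    rwa [he]

lemma closed_downclass (ℓ : ℕ) (hℓ : 2 ≤ ℓ) (μ : YoungDiagram) (hcl : BClosed ℓ μ)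
    {y : ℤ} (hy : InB μ y) {x : ℤ} (hxy : x ≤ y)
    (hmod : ((x : ZMod ℓ)) = ((y : ZMod ℓ))) : InB μ x := by
  have hdvd : (ℓ : ℤ) ∣ (y - x) := by
    have : (((y - x : ℤ)) : ZMod ℓ) = 0 := by push_cast; rw [hmod]; ring
    exact_mod_cast (ZMod.intCast_zmod_eq_zero_iff_dvd _ _).1 this
  obtain ⟨k, hk⟩ := hdvd
  have hk0 : 0 ≤ k := by nlinarith [hxy, hk, show (0:ℤ) < ℓ by omega]
  lift k to ℕ using hk0
  have hx : x = y - k * ℓ := by linarith [hk]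
  rw [hx]
  exact closed_iter ℓ μ hcl hy k


lemma core_closed (ℓ : ℕ) (hℓ : 2 ≤ ℓ) (μ : YoungDiagram) (hcore : IsCore ℓ μ) :
    BClosed ℓ μ := by
  rintro x ⟨a, hax⟩
  by_contra hy
  set y : ℤ := x - ℓ with hydef
  have hex : ∃ c : ℕ, betaZ μ c ≤ y := by
    refine ⟨μ.colLen 0 + (-y).toNat, ?_⟩
    rw [betaZ_of_ge μ (by omega)]
    push_cast
    omega
  classical
  set c0 := Nat.find hex with hc0def
  have hc0 : betaZ μ c0 ≤ y := Nat.find_spec hex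
  have hlt : ∀ c < c0, y < betaZ μ c := fun c hc => by
    have := Nat.find_min hex hc; omega
  have hac0 : a < c0 := by
    by_contra h
    have := (betaZ_strictAnti μ).antitone (show c0 ≤ a by omega)
    omega
  have hc0a : c0 ≤ a + ℓ := Nat.find_min' hex (by have := betaZ_le_sub μ a ℓ; omega)
  have hc0strict : betaZ μ c0 ≤ y - 1 := by
    rcases lt_or_eq_of_le hc0 with h | h
    · omega
    · exact absurd ⟨c0, h⟩ hy
  have hc0y : -y < (c0 : ℤ) := by
    by_contra h
    push_neg at h
    have h1 : (-(c0:ℤ)) ≤ betaZ μ c0 := by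
      have : (0:ℤ) ≤ (μ.rowLen c0 : ℤ) := by positivity
      unfold betaZ; omega
    omega
  set b := (y - 1 + c0).toNat with hbdef
  have hb : (b : ℤ) = y - 1 + c0 := by omega
  have hra : (μ.rowLen a : ℤ) = x + a := by unfold betaZ at hax; omega
  have hab : (a, b) ∈ μ := by
    rw [YoungDiagram.mem_iff_lt_rowLen]
    omega
  have hcol : μ.colLen b = c0 := by
    have h1 : μ.colLen b ≤ c0 := by
      by_contra h
      have h2 : (c0, b) ∈ μ := YoungDiagram.mem_iff_lt_colLen.2 (by omega)
      rw [YoungDiagram.mem_iff_lt_rowLen] at h2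
      have : (b : ℤ) < (μ.rowLen c0 : ℤ) := by exact_mod_cast h2
      unfold betaZ at hc0strict; omega
    have h2 : c0 ≤ μ.colLen b := by
      have hc1 : c0 - 1 < c0 := by omega
      have h3 := hlt (c0 - 1) hc1
      have hmem : (c0 - 1, b) ∈ μ := by
        rw [YoungDiagram.mem_iff_lt_rowLen]
        unfold betaZ at h3
        omega
      have := YoungDiagram.mem_iff_lt_colLen.1 hmem
      omega
    omega
  have hhook : hookLen μ a b = ℓ := by
    have hr2 : b < μ.rowLen a := YoungDiagram.mem_iff_lt_rowLen.1 hab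
    unfold hookLen
    omega
  exact hcore a b hab (hhook ▸ dvd_refl ℓ)

lemma colLen_pos_of_ne_bot {μ : YoungDiagram} (h : μ ≠ ⊥) : 0 < μ.colLen 0 := by
  by_contra hc
  apply h
  ext p
  simp only [YoungDiagram.cells_bot, Finset.notMem_empty, iff_false]
  intro hp
  have h1 : (p.1, 0) ∈ μ := μ.up_left_mem le_rfl (Nat.zero_le _) (by simpa using hp)
  have := YoungDiagram.mem_iff_lt_colLen.1 h1
  omega

section Step

lemma step_main (ℓ : ℕ) [NeZero ℓ] (hℓ : 2 ≤ ℓ) (μ ν : YoungDiagram)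
    (hcl : BClosed ℓ μ) (hstep : CanonicalStep ℓ μ ν) :
    BClosed ℓ ν ∧
      (∑ d : ZMod ℓ, ν.rowLen (fIdx ℓ ν d)) + 1 = ∑ d : ZMod ℓ, μ.rowLen (fIdx ℓ μ d) := by
  haveI : Fact (1 < ℓ) := ⟨by omega⟩
  obtain ⟨hne, hmem⟩ := hstep
  set i := BottomRes ℓ μ with hidef
  set c : ZMod ℓ := i + 1 with hcdef
  have hA0 : 0 < μ.colLen 0 := colLen_pos_of_ne_bot hne
  set A := μ.colLen 0 - 1 with hAdef
  have hArow : 0 < μ.rowLen A := by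
    have h1 : (A, 0) ∈ μ := YoungDiagram.mem_iff_lt_colLen.2 (by omega)
    have := YoungDiagram.mem_iff_lt_rowLen.1 h1
    omega
  have hi2 : i = ((betaZ μ A : ZMod ℓ)) - 1 := by
    rw [hidef, BottomRes, ← hAdef, resBox_end ℓ μ A hArow]
  have hclassA : ((betaZ μ A : ZMod ℓ)) = c := by rw [hcdef, hi2]; ring
  have hA_not : ¬ InB μ (betaZ μ A - 1) := by
    apply not_inB_between μ A
    · rw [betaZ_of_ge μ (show μ.colLen 0 ≤ A + 1 by omega)]
      unfold betaZ
      push_cast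
      omega
    · omega
  obtain ⟨hPc, hPmin⟩ := fIdx_spec ℓ hℓ μ c
  obtain ⟨hQc, hQmin⟩ := fIdx_spec ℓ hℓ μ (c - 1)
  set P := fIdx ℓ μ c with hPdef
  set Q := fIdx ℓ μ (c - 1) with hQdef
  have hPA : P ≤ A := hPmin A hclassA
  have hProw : 0 < μ.rowLen P := lt_of_lt_of_le hArow (μ.rowLen_anti P A hPA)
  have hcc : c - 1 ≠ c := by
    intro h
    have h10 : (1 : ZMod ℓ) = 0 := by linear_combination -h
    exact one_ne_zero h10
  have hclassA1 : ((betaZ μ A - 1 : ℤ) : ZMod ℓ) = c - 1 := by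
    push_cast
    rw [hclassA]
  have hQA : betaZ μ Q < betaZ μ A - 1 := by
    by_contra hcon
    push_neg at hcon
    exact hA_not (closed_downclass ℓ hℓ μ hcl ⟨Q, rfl⟩ hcon (by rw [hclassA1, hQc]))
  have hPbeta : betaZ μ A ≤ betaZ μ P := betaZ_le_fIdx ℓ hℓ μ c A hclassA
  have hPQ2 : betaZ μ Q + 2 ≤ betaZ μ P := by omega
  have hPQ : P < Q := inB_lt μ (by omega)
  have hQ1 : 1 ≤ Q := by omega
  have hTmem : InB μ (betaZ μ Q + 1) :=
    closed_downclass ℓ hℓ μ hcl ⟨P, rfl⟩ (by omega)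
      (by push_cast; rw [hQc, hPc]; ring)
  have hT : betaZ μ (Q - 1) = betaZ μ Q + 1 := by
    obtain ⟨t, ht⟩ := hTmem
    have h1 : t < Q := inB_lt μ (by omega)
    have h2 : betaZ μ (Q - 1) ≤ betaZ μ t := (betaZ_strictAnti μ).antitone (by omega)
    have h3 : betaZ μ Q < betaZ μ (Q - 1) := betaZ_strictAnti μ (by omega)
    omega
  have hclassT : ((betaZ μ (Q - 1) : ZMod ℓ)) = c := by
    rw [hT]
    push_cast
    rw [hQc]
    ring
  set R : ℕ → Prop := fun a => ((betaZ μ a : ZMod ℓ)) = c ∧ betaZ μ Q + 1 < betaZ μ a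
    with hRdef
  -- row lengths of ν
  have hrow1 : ∀ a, R a → 0 < μ.rowLen a ∧ ν.rowLen a = μ.rowLen a - 1 := by
    intro a ha
    have hbeta1 : betaZ μ (a + 1) ≠ betaZ μ a - 1 := by
      intro h
      have hclb : ((betaZ μ (a + 1) : ZMod ℓ)) = c - 1 := by
        rw [h]
        push_cast
        rw [ha.1]
      have := betaZ_le_fIdx ℓ hℓ μ (c - 1) (a + 1) hclb
      rw [← hQdef] at this
      omega
    have hstep1 : betaZ μ (a + 1) ≤ betaZ μ a - 1 := by
      have := betaZ_strictAnti μ (show a < a + 1 by omega)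
      omega
    have h0 : 0 < μ.rowLen a := by
      by_contra h
      push_neg at h
      have h0' : μ.rowLen a = 0 := by omega
      have h1' : μ.rowLen (a + 1) = 0 := by
        have := μ.rowLen_anti a (a + 1) (by omega)
        omega
      apply hbeta1
      unfold betaZ
      rw [h0', h1']
      push_cast
      ring
    have h1 : μ.rowLen (a + 1) < μ.rowLen a := by
      have h2 : betaZ μ (a + 1) < betaZ μ a - 1 := by omega
      unfold betaZ at h2
      push_cast at h2
      omega
    refine ⟨h0, ?_⟩
    have hremv : IsRemovableBox μ a (μ.rowLen a - 1) := by
      refine ⟨YoungDiagram.mem_iff_lt_rowLen.2 (by omega), ?_, ?_⟩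
      · rw [YoungDiagram.mem_iff_lt_rowLen]
        omega
      · rw [YoungDiagram.mem_iff_lt_rowLen]
        omega
    have hres : resBox ℓ a (μ.rowLen a - 1) = i := by
      rw [resBox_end ℓ μ a h0, ha.1, hcdef]
      ring
    have hnot : (a, μ.rowLen a - 1) ∉ ν := by
      rw [hmem]
      dsimp only
      rintro ⟨-, hno⟩
      exact hno ⟨hremv, hres⟩
    have hkeep : ∀ b, b + 1 < μ.rowLen a → (a, b) ∈ ν := by
      intro b hb
      rw [hmem]
      dsimp only
      refine ⟨YoungDiagram.mem_iff_lt_rowLen.2 (by omega), ?_⟩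
      rintro ⟨hrem, -⟩
      exact hrem.2.1 (YoungDiagram.mem_iff_lt_rowLen.2 (by omega))
    have hub : ν.rowLen a ≤ μ.rowLen a - 1 := by
      by_contra h
      push_neg at h
      exact hnot (YoungDiagram.mem_iff_lt_rowLen.2 (by omega))
    have hlb : μ.rowLen a - 1 ≤ ν.rowLen a := by
      by_contra h
      push_neg at h
      have := YoungDiagram.mem_iff_lt_rowLen.1 (hkeep (ν.rowLen a) (by omega))
      omega
    omega
  have hrow2 : ∀ a, ¬ R a → ν.rowLen a = μ.rowLen a := by
    intro a ha
    have hkeep : ∀ b, b < μ.rowLen a → (a, b) ∈ ν := by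
      intro b hb
      rw [hmem]
      dsimp only
      refine ⟨YoungDiagram.mem_iff_lt_rowLen.2 hb, ?_⟩
      rintro ⟨hrem, hres⟩
      have hb1 : b = μ.rowLen a - 1 := by
        have := hrem.2.1
        rw [YoungDiagram.mem_iff_lt_rowLen] at this
        omega
      have h1 : μ.rowLen (a + 1) < μ.rowLen a := by
        have := hrem.2.2
        rw [YoungDiagram.mem_iff_lt_rowLen] at this
        omega
      have h0 : 0 < μ.rowLen a := by omega
      rw [hb1, resBox_end ℓ μ a h0] at hres
      have hclass : ((betaZ μ a : ZMod ℓ)) = c := by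
        rw [hcdef]
        linear_combination hres
      have hgap : ¬ InB μ (betaZ μ a - 1) := by
        apply not_inB_between μ a
        · unfold betaZ
          push_cast
          omega
        · omega
      have hQa : betaZ μ Q < betaZ μ a - 1 := by
        by_contra hcon
        push_neg at hcon
        apply hgap
        apply closed_downclass ℓ hℓ μ hcl ⟨Q, rfl⟩ hcon
        rw [hQc]
        push_cast
        rw [hclass]
      exact ha ⟨hclass, by omega⟩
    have hub : ν.rowLen a ≤ μ.rowLen a := by
      by_contra h
      push_neg at h
      have h3 := ((hmem (a, μ.rowLen a)).1 (YoungDiagram.mem_iff_lt_rowLen.2 h)).1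
      rw [YoungDiagram.mem_iff_lt_rowLen] at h3
      omega
    have hlb : μ.rowLen a ≤ ν.rowLen a := by
      by_contra h
      push_neg at h
      have := YoungDiagram.mem_iff_lt_rowLen.1 (hkeep (ν.rowLen a) (by omega))
      omega
    omega
  have hbetaν1 : ∀ a, R a → betaZ ν a = betaZ μ a - 1 := by
    intro a ha
    obtain ⟨h0, h1⟩ := hrow1 a ha
    unfold betaZ
    rw [h1]
    push_cast [h0]
    omega
  have hbetaν2 : ∀ a, ¬ R a → betaZ ν a = betaZ μ a := by
    intro a ha
    unfold betaZ
    rw [hrow2 a ha]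
  -- fIdx computations for ν
  have hRP : R P := ⟨hPc, by omega⟩
  have hfc1 : fIdx ℓ ν (c - 1) = P := by
    apply fIdx_eq ℓ hℓ ν (c - 1) P
    · rw [hbetaν1 P hRP]
      push_cast
      rw [hPc]
    · intro b hb hclb
      by_cases hRb : R b
      · have := hPmin b hRb.1
        omega
      · rw [hbetaν2 b hRb] at hclb
        have := hQmin b hclb
        omega
  have hrowP : ν.rowLen P = μ.rowLen P - 1 := (hrow1 P hRP).2
  have hnRT : ¬ R (Q - 1) := by
    intro h
    have h2 := h.2
    omega
  have hfc : fIdx ℓ ν c = Q - 1 := by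
    apply fIdx_eq ℓ hℓ ν c (Q - 1)
    · rw [hbetaν2 _ hnRT]
      exact hclassT
    · intro b hb hclb
      by_cases hRb : R b
      · rw [hbetaν1 b hRb] at hclb
        push_cast at hclb
        rw [hRb.1] at hclb
        exact hcc hclb
      · rw [hbetaν2 b hRb] at hclb
        have h1 : betaZ μ b ≤ betaZ μ Q + 1 := by
          by_contra hx
          push_neg at hx
          exact hRb ⟨hclb, hx⟩
        have h2 : betaZ μ (Q - 1) < betaZ μ b := betaZ_strictAnti μ (by omega)
        omega
  have hrowT : ν.rowLen (Q - 1) = μ.rowLen Q := by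
    have h1 := hrow2 (Q - 1) hnRT
    have h2 := hT
    unfold betaZ at h2
    omega
  have hfother : ∀ d : ZMod ℓ, d ≠ c → d ≠ c - 1 →
      fIdx ℓ ν d = fIdx ℓ μ d ∧ ν.rowLen (fIdx ℓ μ d) = μ.rowLen (fIdx ℓ μ d) := by
    intro d hdc hdc1
    obtain ⟨hEc, hEmin⟩ := fIdx_spec ℓ hℓ μ d
    have hnRE : ¬ R (fIdx ℓ μ d) := by
      intro h
      rw [h.1] at hEc
      exact hdc hEc.symm
    constructor
    · apply fIdx_eq ℓ hℓ ν d
      · rw [hbetaν2 _ hnRE]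
        exact hEc
      · intro b hb hclb
        by_cases hRb : R b
        · rw [hbetaν1 b hRb] at hclb
          push_cast at hclb
          rw [hRb.1] at hclb
          exact hdc1 hclb.symm
        · rw [hbetaν2 b hRb] at hclb
          have := hEmin b hclb
          omega
    · exact hrow2 _ hnRE
  -- closure for ν
  have hclν : BClosed ℓ ν := by
    rintro x ⟨a, hax⟩
    by_cases hRa : R a
    · have hxval : x = betaZ μ a - 1 := by rw [← hbetaν1 a hRa, hax]
      have hclx : ((x : ZMod ℓ)) = c - 1 := by
        rw [hxval]
        push_cast
        rw [hRa.1]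
      by_cases hxq : betaZ μ Q < x - ℓ
      · obtain ⟨b, hb⟩ := hcl (betaZ μ a) ⟨a, rfl⟩
        have hRb : R b := by
          constructor
          · rw [hb]
            push_cast [ZMod.natCast_self]
            rw [hRa.1]
            ring
          · omega
        exact ⟨b, by rw [hbetaν1 b hRb, hb]; omega⟩
      · push_neg at hxq
        have hin : InB μ (x - ℓ) := by
          apply closed_downclass ℓ hℓ μ hcl ⟨Q, rfl⟩ hxq
          rw [hQc]
          push_cast [ZMod.natCast_self]
          rw [hclx]
          ring
        obtain ⟨b, hb⟩ := hin
        have hnRb : ¬ R b := by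
          intro h
          apply hcc
          have h1 := h.1
          rw [hb] at h1
          have h2 : ((x - (ℓ:ℕ) : ℤ) : ZMod ℓ) = c - 1 := by
            push_cast [ZMod.natCast_self]
            rw [hclx]
            ring
          rw [h1] at h2
          exact h2.symm
        exact ⟨b, by rw [hbetaν2 b hnRb, hb]⟩
    · have hxval : x = betaZ μ a := by rw [← hbetaν2 a hRa, hax]
      obtain ⟨b, hb⟩ := hcl x ⟨a, hxval.symm⟩
      by_cases hRb : R b
      · exfalso
        apply hRa
        constructor
        · have h1 := hRb.1
          rw [hb] at h1
          push_cast [ZMod.natCast_self] at h1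
          rw [← hxval]
          simpa using h1
        · have h2 := hRb.2
          omega
      · exact ⟨b, by rw [hbetaν2 b hRb, hb]⟩
  refine ⟨hclν, ?_⟩
  have hsplit : ∀ H : ZMod ℓ → ℕ, ∑ d : ZMod ℓ, H d
      = H c + (H (c - 1) + ∑ d ∈ ((Finset.univ.erase c).erase (c - 1)), H d) := by
    intro H
    rw [← Finset.add_sum_erase _ H (Finset.mem_univ c),
      ← Finset.add_sum_erase _ H (Finset.mem_erase.2 ⟨hcc, Finset.mem_univ (c - 1)⟩)]
  rw [hsplit, hsplit]
  have hce : ∑ d ∈ ((Finset.univ.erase c).erase (c - 1)), ν.rowLen (fIdx ℓ ν d)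
      = ∑ d ∈ ((Finset.univ.erase c).erase (c - 1)), μ.rowLen (fIdx ℓ μ d) := by
    apply Finset.sum_congr rfl
    intro d hd
    rw [Finset.mem_erase, Finset.mem_erase] at hd
    obtain ⟨h1, h2, _⟩ := hd
    obtain ⟨he, hr⟩ := hfother d h2 h1
    rw [he, hr]
  rw [hce, hfc, hfc1, hrowT, hrowP, ← hPdef, ← hQdef]
  omega

end Step

lemma sum_longest (ℓ : ℕ) [NeZero ℓ] (hℓ : 2 ≤ ℓ) (lam : YoungDiagram) :
    ∑ i ∈ Finset.range ℓ, LongestRowWithRes ℓ lam ((i : ZMod ℓ)) =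
      ∑ d : ZMod ℓ, lam.rowLen (fIdx ℓ lam d) := by
  refine Finset.sum_nbij' (fun j => (j : ZMod ℓ) + 1) (fun d => (d - 1).val)
    (fun a _ => Finset.mem_univ _) (fun d _ => Finset.mem_range.2 (ZMod.val_lt _))
    ?_ ?_ ?_
  · intro a ha
    try dsimp only
    rw [add_sub_cancel_right, ZMod.val_cast_of_lt (Finset.mem_range.1 ha)]
  · intro d _
    try dsimp only
    rw [ZMod.natCast_rightInverse (d - 1)]
    ring
  · intro a _
    have := longestRow_eq ℓ hℓ lam ((a : ZMod ℓ) + 1)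
    rw [add_sub_cancel_right] at this
    exact this


end AuxCoreLen

/-- The Coxeter length of the canonical reduced word `w(λ)` of an `ℓ`-core `λ` —
the number of steps in the canonical recursion from `λ` down to the empty
partition — equals `∑_{i=0}^{ℓ-1} λ_{R(i)}`, where `R(i)` is the longest row of
`λ` whose rightmost box has residue `i`. -/
theorem stmt_19 (ℓ N : ℕ) (hℓ : 2 ≤ ℓ) (lam : YoungDiagram)
    (hcore : IsCore ℓ lam) (f : ℕ → YoungDiagram)
    (h0 : f 0 = lam) (hN : f N = ⊥)
    (hstep : ∀ n < N, CanonicalStep ℓ (f n) (f (n + 1))) :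
    N = ∑ i ∈ Finset.range ℓ, LongestRowWithRes ℓ lam (i : ZMod ℓ) := by
  haveI : NeZero ℓ := ⟨by omega⟩
  have hcl0 : BClosed ℓ lam := core_closed ℓ hℓ lam hcore
  have key : ∀ n : ℕ, n ≤ N → BClosed ℓ (f n) ∧
      (∑ d : ZMod ℓ, (f n).rowLen (fIdx ℓ (f n) d)) + n
        = ∑ d : ZMod ℓ, lam.rowLen (fIdx ℓ lam d) := by
    intro n
    induction n with
    | zero =>
      intro _
      rw [h0]
      exact ⟨hcl0, by omega⟩
    | succ n ih =>
      intro hn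
      obtain ⟨hc1, hs1⟩ := ih (by omega)
      obtain ⟨hc2, hs2⟩ := step_main ℓ hℓ (f n) (f (n + 1)) hc1 (hstep n (by omega))
      exact ⟨hc2, by omega⟩
  obtain ⟨-, hfin⟩ := key N le_rfl
  rw [hN] at hfin
  have hbot : (∑ d : ZMod ℓ, (⊥ : YoungDiagram).rowLen (fIdx ℓ ⊥ d)) = 0 := by
    apply Finset.sum_eq_zero
    intro d _
    by_contra h
    have hm : ((fIdx ℓ ⊥ d), 0) ∈ (⊥ : YoungDiagram) :=
      YoungDiagram.mem_iff_lt_rowLen.2 (by omega)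
    exact YoungDiagram.notMem_bot _ hm
  rw [hbot] at hfin
  rw [sum_longest ℓ hℓ lam]
  omega
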